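/- Every r-local subdivision of a wheel has (weighted) diameter at most r. -/

import Mathlib

/-!
Common definitions: weighted graphs, weighted lengths of walks, 𝔽₂-generation of cycles,
subdivisions of wheels (with pieces and rim), theta graphs, the classes 𝒲 and 𝒲*,
fans and pre-fans, arcs/bridges/detours of a cycle relative to a theta graph.
-/

open SimpleGraph

namespace LocalWheels

variable {V : Type*} [Fintype V] [DecidableEq V]

/-- The weighted length of a walk: the sum of the weights of its edges. -/
def wlen {G : SimpleGraph V} (wt : Sym2 V → ℕ) {u v : V} (p : G.Walk u v) : ℕ :=
  (p.edges.map wt).sum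

/-- All edges of `G` have positive weight. -/
def WeightPos (G : SimpleGraph V) (wt : Sym2 V → ℕ) : Prop :=
  ∀ e ∈ G.edgeSet, 0 < wt e

/-- `t` is the 𝔽₂-sum (iterated symmetric difference) of finitely many members of `𝒞`. -/
def IsF2Sum (𝒞 : Set (Finset (Sym2 V))) (t : Finset (Sym2 V)) : Prop :=
  ∃ l : List (Finset (Sym2 V)), (∀ s ∈ l, s ∈ 𝒞) ∧ l.foldr symmDiff ∅ = t

/-- The edge sets of the cycles of the subgraph with edge set `E` having weighted length
at most `r`. -/
def shortCycleEdgeSets (G : SimpleGraph V) (wt : Sym2 V → ℕ) (r : ℕ∞) (E : Set (Sym2 V)) :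
    Set (Finset (Sym2 V)) :=
  {t | ∃ (v : V) (c : G.Walk v v), c.IsCycle ∧ (∀ e ∈ c.edges, e ∈ E) ∧
        (wlen wt c : ℕ∞) ≤ r ∧ c.edges.toFinset = t}

/-- Every cycle of the subgraph with edge set `E` is generated (over 𝔽₂) by the cycles of
that subgraph of weighted length at most `r`. -/
def LocallyGenerated (G : SimpleGraph V) (wt : Sym2 V → ℕ) (r : ℕ∞) (E : Set (Sym2 V)) : Prop :=
  ∀ (v : V) (c : G.Walk v v), c.IsCycle → (∀ e ∈ c.edges, e ∈ E) →
    IsF2Sum (shortCycleEdgeSets G wt r E) c.edges.toFinset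

/-- A subdivision of a wheel inside the graph `G`: a center, `n ≥ 3` branch vertices on the
rim, internally disjoint spoke paths from the center to the branch vertices and internally
disjoint rim arcs joining consecutive branch vertices. -/
structure WheelSubdiv (G : SimpleGraph V) where
  n : ℕ
  hn : 3 ≤ n
  center : V
  branch : Fin n → V
  branch_inj : Function.Injective branch
  center_ne : ∀ i, center ≠ branch i
  spoke : (i : Fin n) → G.Walk center (branch i)
  arc : (i : Fin n) → G.Walk (branch i) (branch (finRotate n i))
  spoke_path : ∀ i, (spoke i).IsPath
  arc_path : ∀ i, (arc i).IsPath
  spoke_spoke : ∀ i j, i ≠ j →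
    {x | x ∈ (spoke i).support} ∩ {x | x ∈ (spoke j).support} = {center}
  arc_arc : ∀ i j, i ≠ j →
    {x | x ∈ (arc i).support} ∩ {x | x ∈ (arc j).support} =
      ({branch i, branch (finRotate n i)} ∩ {branch j, branch (finRotate n j)} : Set V)
  spoke_arc : ∀ i j,
    {x | x ∈ (spoke i).support} ∩ {x | x ∈ (arc j).support} =
      ({center, branch i} ∩ {branch j, branch (finRotate n j)} : Set V)

namespace WheelSubdiv

variable {G : SimpleGraph V}

/-- The vertices of the subdivision of the wheel. -/
def support (W : WheelSubdiv G) : Set V :=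
  {x | ∃ i, x ∈ (W.spoke i).support ∨ x ∈ (W.arc i).support}

/-- The edges of the subdivision of the wheel. -/
def edges (W : WheelSubdiv G) : Set (Sym2 V) :=
  {e | ∃ i, e ∈ (W.spoke i).edges ∨ e ∈ (W.arc i).edges}

/-- The `i`-th piece of the subdivision of the wheel: the cycle through the center obtained
from the `i`-th spoke, the `i`-th rim arc and the `(i+1)`-st spoke. -/
def piece (W : WheelSubdiv G) (i : Fin W.n) : G.Walk W.center W.center :=
  (W.spoke i).append ((W.arc i).append (W.spoke (finRotate W.n i)).reverse)

/-- The weighted length of the `i`-th piece. -/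
def pieceLen (W : WheelSubdiv G) (wt : Sym2 V → ℕ) (i : Fin W.n) : ℕ :=
  wlen wt (W.piece i)

/-- The weighted length of the rim. -/
def rimLen (W : WheelSubdiv G) (wt : Sym2 V → ℕ) : ℕ :=
  ∑ i, wlen wt (W.arc i)

/-- The subdivision of the wheel is `r`-bounded: all pieces have length at most `r`. -/
def RBounded (W : WheelSubdiv G) (wt : Sym2 V → ℕ) (r : ℕ∞) : Prop :=
  ∀ i, (W.pieceLen wt i : ℕ∞) ≤ r

/-- The subdivision of the wheel has an `r`-explicit generating set: all pieces have
length at most `r`, or all pieces except one have length at most `r` and the rim has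
length at most `r`. -/
def RExplicit (W : WheelSubdiv G) (wt : Sym2 V → ℕ) (r : ℕ∞) : Prop :=
  (∀ i, (W.pieceLen wt i : ℕ∞) ≤ r) ∨
    ((∃ i₀, ∀ i, i ≠ i₀ → (W.pieceLen wt i : ℕ∞) ≤ r) ∧ (W.rimLen wt : ℕ∞) ≤ r)

/-- The subdivision of the wheel is `r`-local: its cycles of length at most `r` generate
all its cycles. -/
def RLocal (W : WheelSubdiv G) (wt : Sym2 V → ℕ) (r : ℕ∞) : Prop :=
  LocallyGenerated G wt r W.edges

end WheelSubdiv

/-- A theta graph of parameter `r` inside `G`: two branching vertices joined by three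
internally disjoint paths (its arms) such that at least two of the three cycles formed by
unions of pairs of arms have weighted length at most `r`. -/
structure Theta (G : SimpleGraph V) (wt : Sym2 V → ℕ) (r : ℕ∞) where
  v : V
  w : V
  hvw : v ≠ w
  arm : Fin 3 → G.Walk v w
  arm_path : ∀ i, (arm i).IsPath
  arm_inter : ∀ i j, i ≠ j →
    {x | x ∈ (arm i).support} ∩ {x | x ∈ (arm j).support} = {v, w}
  arm_ne : ∀ i j, i ≠ j → (arm i).edges ≠ (arm j).edges
  param : ∃ i j k : Fin 3, i ≠ j ∧ i ≠ k ∧ j ≠ k ∧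
    ((wlen wt (arm i) + wlen wt (arm j) : ℕ) : ℕ∞) ≤ r ∧
    ((wlen wt (arm i) + wlen wt (arm k) : ℕ) : ℕ∞) ≤ r

namespace Theta

variable {G : SimpleGraph V} {wt : Sym2 V → ℕ} {r : ℕ∞}

/-- The vertices of the theta graph. -/
def support (θ : Theta G wt r) : Set V := {x | ∃ i, x ∈ (θ.arm i).support}

/-- The edges of the theta graph. -/
def edges (θ : Theta G wt r) : Set (Sym2 V) := {e | ∃ i, e ∈ (θ.arm i).edges}

/-- `x` is an interior vertex of the `i`-th arm. -/
def interior (θ : Theta G wt r) (i : Fin 3) (x : V) : Prop :=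
  x ∈ (θ.arm i).support ∧ x ≠ θ.v ∧ x ≠ θ.w

/-- `x` is a branching vertex of the theta graph. -/
def IsBranch (θ : Theta G wt r) (x : V) : Prop := x = θ.v ∨ x = θ.w

end Theta

/-- `p` lies strictly between `x` and `y` on the path `A`. -/
def StrictlyBetween {G : SimpleGraph V} {u₀ w₀ : V} (A : G.Walk u₀ w₀) (p x y : V)
    (hp : p ∈ A.support) : Prop :=
  p ≠ x ∧ p ≠ y ∧
    ((x ∈ (A.takeUntil p hp).support ∧ y ∈ (A.dropUntil p hp).support) ∨
     (y ∈ (A.takeUntil p hp).support ∧ x ∈ (A.dropUntil p hp).support))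

/-- The subgraph of `G` with vertex set `S` and edge set `E` belongs to the class `𝒲`:
it is obtained from a theta graph of parameter `r` by attaching a path `P` at interior
vertices of two different arms, in such a way that it contains a cycle of length at most
`r` including `P`. -/
def InW (G : SimpleGraph V) (wt : Sym2 V → ℕ) (r : ℕ∞) (S : Set V) (E : Set (Sym2 V)) :
    Prop :=
  ∃ (θ : Theta G wt r) (i j : Fin 3) (p₁ p₂ : V) (P : G.Walk p₁ p₂),
    i ≠ j ∧ θ.interior i p₁ ∧ θ.interior j p₂ ∧ P.IsPath ∧
    {x | x ∈ P.support} ∩ θ.support = {p₁, p₂} ∧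
    S = θ.support ∪ {x | x ∈ P.support} ∧
    E = θ.edges ∪ {e | e ∈ P.edges} ∧
    ∃ (u : V) (c : G.Walk u u), c.IsCycle ∧ (∀ e ∈ c.edges, e ∈ E) ∧
      ((wlen wt c : ℕ) : ℕ∞) ≤ r ∧ ∀ e ∈ P.edges, e ∈ c.edges

/-- The subgraph of `G` with vertex set `S` and edge set `E` belongs to the class `𝒲*`:
it is obtained from a theta graph of parameter `r` by attaching a path `P` at interior
vertices of two different arms and a path `Q` at a branching vertex and an interior vertex
of an arm that also contains an endvertex of `P`, that endvertex of `P` lying strictly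
between the two endvertices of `Q` on that arm, in such a way that it contains a cycle of
length at most `r` including both `P` and `Q`. -/
def InWStar (G : SimpleGraph V) (wt : Sym2 V → ℕ) (r : ℕ∞) (S : Set V) (E : Set (Sym2 V)) :
    Prop :=
  ∃ (θ : Theta G wt r) (i j : Fin 3) (p₁ p₂ : V) (P : G.Walk p₁ p₂),
    i ≠ j ∧ θ.interior i p₁ ∧ θ.interior j p₂ ∧ P.IsPath ∧
    {x | x ∈ P.support} ∩ θ.support = {p₁, p₂} ∧
    ∃ (b q : V) (k : Fin 3) (Q : G.Walk b q),
      θ.IsBranch b ∧ θ.interior k q ∧ Q.IsPath ∧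
      {x | x ∈ Q.support} ∩ (θ.support ∪ {x | x ∈ P.support}) = {b, q} ∧
      (∃ (p : V) (hp : p ∈ (θ.arm k).support), (p = p₁ ∨ p = p₂) ∧
        StrictlyBetween (θ.arm k) p b q hp) ∧
      S = θ.support ∪ {x | x ∈ P.support} ∪ {x | x ∈ Q.support} ∧
      E = θ.edges ∪ {e | e ∈ P.edges} ∪ {e | e ∈ Q.edges} ∧
      ∃ (u : V) (c : G.Walk u u), c.IsCycle ∧ (∀ e ∈ c.edges, e ∈ E) ∧
        ((wlen wt c : ℕ) : ℕ∞) ≤ r ∧ (∀ e ∈ P.edges, e ∈ c.edges) ∧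
        ∀ e ∈ Q.edges, e ∈ c.edges

/-- `Q` is a subpath of the cycle `o`: a path all of whose edges are edges of `o`. -/
def IsSubpathOf {G : SimpleGraph V} {a b u : V} (Q : G.Walk a b) (o : G.Walk u u) : Prop :=
  Q.IsPath ∧ ∀ e ∈ Q.edges, e ∈ o.edges

namespace Theta

variable {G : SimpleGraph V} {wt : Sym2 V → ℕ} {r : ℕ∞}

/-- `Q` is an arc of the cycle `o` relative to the theta graph `θ`: a nontrivial subpath
of `o` meeting `θ` exactly in its two endvertices. -/
def IsArc (θ : Theta G wt r) {u a b : V} (o : G.Walk u u) (Q : G.Walk a b) : Prop :=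
  IsSubpathOf Q o ∧ 0 < Q.length ∧ a ∈ θ.support ∧ b ∈ θ.support ∧
    ∀ x ∈ Q.support, x ≠ a → x ≠ b → x ∉ θ.support

/-- `Q` is a `θ`-bridge of `o`: an arc whose endvertices are interior vertices of two
different arms of `θ`. -/
def IsBridgeArc (θ : Theta G wt r) {u a b : V} (o : G.Walk u u) (Q : G.Walk a b) : Prop :=
  θ.IsArc o Q ∧ ∃ i j : Fin 3, i ≠ j ∧ θ.interior i a ∧ θ.interior j b

/-- `Q` is a `θ`-detour of `o`: an arc that is not a bridge. -/
def IsDetourArc (θ : Theta G wt r) {u a b : V} (o : G.Walk u u) (Q : G.Walk a b) : Prop :=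
  θ.IsArc o Q ∧ ¬ ∃ i j : Fin 3, i ≠ j ∧ θ.interior i a ∧ θ.interior j b

/-- The arc `R` is strongly adjacent to the arc `S`: some subpath `X` of `o` joins an
endvertex of `R` to an endvertex of `S`, contains no internal vertex of any arc, and the
endvertex of `R` on `X` is not a branching vertex of `θ`. -/
def StronglyAdj (θ : Theta G wt r) {u r₁ r₂ s₁ s₂ : V} (o : G.Walk u u)
    (R : G.Walk r₁ r₂) (S : G.Walk s₁ s₂) : Prop :=
  ∃ (x y : V) (X : G.Walk x y), (x = r₁ ∨ x = r₂) ∧ (y = s₁ ∨ y = s₂) ∧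
    IsSubpathOf X o ∧
    (∀ z ∈ X.support, ∀ (a b : V) (Q : G.Walk a b), θ.IsArc o Q → z ∈ Q.support →
      z = a ∨ z = b) ∧
    ¬ θ.IsBranch x ∧ R.length = R.length ∧ S.length = S.length

/-- The bridge `Q` is primary (relative to the branching vertex `vb` on `o`): it has an
endvertex `x` such that a shortest path from `x` to `vb` within the cycle `o` includes `Q`. -/
def PrimaryBridge (θ : Theta G wt r) {u a b : V} (o : G.Walk u u) (vb : V)
    (Q : G.Walk a b) : Prop :=
  ∃ x : V, (x = a ∨ x = b) ∧ ∃ S : G.Walk x vb, IsSubpathOf S o ∧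
    (∀ S' : G.Walk x vb, IsSubpathOf S' o → wlen wt S ≤ wlen wt S') ∧
    ∀ e ∈ Q.edges, e ∈ S.edges

end Theta

/-- Common data of fans and pre-fans of parameter `r` centered at `v`: a nonempty sequence
of (oriented) cycles through `v`, each of weighted length at most `r`. -/
structure FanSeq (G : SimpleGraph V) (wt : Sym2 V → ℕ) (r : ℕ∞) (v : V) where
  n : ℕ
  hn : 0 < n
  piece : Fin n → G.Walk v v
  piece_cycle : ∀ i, (piece i).IsCycle
  piece_len : ∀ i, (wlen wt (piece i) : ℕ∞) ≤ r

namespace FanSeq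

variable {G : SimpleGraph V} {wt : Sym2 V → ℕ} {r : ℕ∞} {v : V}

/-- The index of the first piece. -/
def first (F : FanSeq G wt r v) : Fin F.n := ⟨0, F.hn⟩

/-- The index of the last piece. -/
def last (F : FanSeq G wt r v) : Fin F.n := ⟨F.n - 1, Nat.sub_lt F.hn Nat.one_pos⟩

/-- The start of the pre-fan: the edge of the first cycle immediately before `v`. -/
def preStart (F : FanSeq G wt r v) : Sym2 V :=
  s((F.piece F.first).reverse.getVert 1, v)

/-- The end of the pre-fan: the edge of the last cycle immediately after `v`. -/
def preEnd (F : FanSeq G wt r v) : Sym2 V :=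
  s(v, (F.piece F.last).getVert 1)

/-- The start of the fan: the first edge of the first cycle. -/
def fanStart (F : FanSeq G wt r v) : Sym2 V :=
  s(v, (F.piece F.first).getVert 1)

/-- The end of the fan: the last edge of the last cycle. -/
def fanEnd (F : FanSeq G wt r v) : Sym2 V :=
  s((F.piece F.last).reverse.getVert 1, v)

/-- The edges of (the union of the pieces of) the fan. -/
def edges (F : FanSeq G wt r v) : Set (Sym2 V) := {e | ∃ i, e ∈ (F.piece i).edges}

/-- The pre-fan condition: the vertex just after `v` on a piece equals the vertex just
before `v` on the next piece. -/
def IsPreFan (F : FanSeq G wt r v) : Prop :=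
  ∀ (i : ℕ) (h : i + 1 < F.n),
    (F.piece ⟨i, Nat.lt_of_succ_lt h⟩).getVert 1 =
      (F.piece ⟨i + 1, h⟩).reverse.getVert 1

/-- The fan condition: pieces at distance at least two meet exactly in `v`, and each piece
has the form `v Lᵢ Mᵢ Rᵢ v` where `Rᵢ = L_{i+1}` is exactly the intersection of consecutive
pieces. -/
def IsFan (F : FanSeq G wt r v) : Prop :=
  (∀ i j : Fin F.n, 2 ≤ |((i : ℕ) : ℤ) - ((j : ℕ) : ℤ)| →
      {x | x ∈ (F.piece i).support} ∩ {x | x ∈ (F.piece j).support} = {v}) ∧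
  ∀ (i : ℕ) (h : i + 1 < F.n),
    ∃ (x : V) (hx : x ∈ (F.piece ⟨i, Nat.lt_of_succ_lt h⟩).support)
      (hx' : x ∈ (F.piece ⟨i + 1, h⟩).support),
      (F.piece ⟨i, Nat.lt_of_succ_lt h⟩).dropUntil x hx =
        ((F.piece ⟨i + 1, h⟩).takeUntil x hx').reverse ∧
      {y | y ∈ (F.piece ⟨i, Nat.lt_of_succ_lt h⟩).support} ∩
          {y | y ∈ (F.piece ⟨i + 1, h⟩).support} =
        {y | y ∈ ((F.piece ⟨i, Nat.lt_of_succ_lt h⟩).dropUntil x hx).support}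

end FanSeq


section Helpers
set_option linter.unusedSectionVars false
variable {V : Type*} [Fintype V] [DecidableEq V] {G : SimpleGraph V}




lemma mem_tail {α : Type*} {a : α} {l : List α} (h : a ∈ l.tail) : a ∈ l :=
  (List.tail_sublist l).mem h

lemma mem_support_of_mem_edges' {u v x : V} {p : G.Walk u v} {e : Sym2 V}
    (he : e ∈ p.edges) (hx : x ∈ e) : x ∈ p.support := by
  induction e with
  | _ a b =>
    rcases Sym2.mem_iff.1 hx with rfl | rfl
    · exact p.fst_mem_support_of_mem_edges he
    · exact p.snd_mem_support_of_mem_edges he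

lemma length_pos_of_ne {u v : V} (p : G.Walk u v) (h : u ≠ v) : 0 < p.length := by
  cases p with
  | nil => exact absurd rfl h
  | cons ha q => simp [Walk.length_cons]

lemma exists_edge_of_mem_support {u v x : V} (p : G.Walk u v) (hp : 0 < p.length)
    (hx : x ∈ p.support) : ∃ e ∈ p.edges, x ∈ e := by
  induction p with
  | nil => simp at hp
  | @cons u w v ha q ih =>
    rw [Walk.support_cons] at hx
    rcases List.mem_cons.1 hx with rfl | hx'
    · exact ⟨s(x, w), by simp [Walk.edges_cons], by simp⟩
    · by_cases hq : 0 < q.length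
      · obtain ⟨e, he, hxe⟩ := ih hq hx'
        exact ⟨e, by simp [Walk.edges_cons, he], hxe⟩
      · cases q with
        | nil =>
          simp at hx'
          subst hx'
          exact ⟨s(u, x), by simp [Walk.edges_cons], by simp⟩
        | cons hb q' => simp [Walk.length_cons] at hq

lemma support_subset_of_edges_subset {u v a b : V} {p : G.Walk u v} {q : G.Walk a b}
    (hlen : 0 < p.length) (h : ∀ e ∈ p.edges, e ∈ q.edges) :
    ∀ x ∈ p.support, x ∈ q.support := by
  intro x hx
  obtain ⟨e, he, hxe⟩ := exists_edge_of_mem_support p hlen hx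
  exact mem_support_of_mem_edges' (h e he) hxe

lemma edge_at_start_unique {u v : V} {p : G.Walk u v} (hp : p.IsPath)
    {e f : Sym2 V} (he : e ∈ p.edges) (hf : f ∈ p.edges) (hue : u ∈ e) (huf : u ∈ f) :
    e = f := by
  induction p with
  | nil => simp at he
  | @cons u w v ha q ih =>
    rw [Walk.cons_isPath_iff] at hp
    have key : ∀ g ∈ (Walk.cons ha q).edges, u ∈ g → g = s(u, w) := by
      intro g hg hug
      rw [Walk.edges_cons] at hg
      rcases List.mem_cons.1 hg with rfl | hg'
      · rfl
      · exact absurd (mem_support_of_mem_edges' hg' hug) hp.2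
    rw [key e he hue, key f hf huf]

lemma edge_at_end_unique {u v : V} {p : G.Walk u v} (hp : p.IsPath)
    {e f : Sym2 V} (he : e ∈ p.edges) (hf : f ∈ p.edges) (hue : v ∈ e) (huf : v ∈ f) :
    e = f := by
  refine edge_at_start_unique hp.reverse (e := e) (f := f) ?_ ?_ hue huf <;>
    simpa [Walk.edges_reverse]

lemma cycle_two_edges_at_start {x : V} {q : G.Walk x x} (hq : q.IsCycle) :
    ∃ e f, e ∈ q.edges ∧ f ∈ q.edges ∧ e ≠ f ∧ x ∈ e ∧ x ∈ f := by
  cases q with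
  | nil => exact absurd rfl hq.ne_nil
  | @cons x w _ ha t =>
    have ht : 0 < t.length := by
      have := hq.three_le_length
      rw [Walk.length_cons] at this; omega
    obtain ⟨e2, he2, hxe2⟩ := exists_edge_of_mem_support t ht t.end_mem_support
    refine ⟨s(x, w), e2, by simp [Walk.edges_cons], by simp [Walk.edges_cons, he2], ?_, by simp, hxe2⟩
    intro hcontra
    have hnodup := hq.isTrail.edges_nodup
    rw [Walk.edges_cons] at hnodup
    rw [hcontra] at hnodup
    exact (List.nodup_cons.1 hnodup).1 he2

lemma cycle_two_edges {v x : V} {c : G.Walk v v} (hc : c.IsCycle) (hx : x ∈ c.support) :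
    ∃ e f, e ∈ c.edges ∧ f ∈ c.edges ∧ e ≠ f ∧ x ∈ e ∧ x ∈ f := by
  have hrot := (c.rotate_edges x hx).perm
  obtain ⟨e, f, he, hf, hef, hxe, hxf⟩ := cycle_two_edges_at_start (hc.rotate hx)
  exact ⟨e, f, hrot.mem_iff.1 he, hrot.mem_iff.1 hf, hef, hxe, hxf⟩



lemma wlen_append (wt : Sym2 V → ℕ) {u v w : V} (p : G.Walk u v) (q : G.Walk v w) :
    wlen wt (p.append q) = wlen wt p + wlen wt q := by
  simp [wlen, Walk.edges_append]

lemma wlen_reverse (wt : Sym2 V → ℕ) {u v : V} (p : G.Walk u v) :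
    wlen wt p.reverse = wlen wt p := by
  simp [wlen, Walk.edges_reverse, List.sum_reverse]

lemma wlen_le_of_nodup_subset (wt : Sym2 V → ℕ) {u v a b : V} {p : G.Walk u v}
    {q : G.Walk a b} (hnd : p.edges.Nodup) (hsub : p.edges ⊆ q.edges) :
    wlen wt p ≤ wlen wt q := by
  obtain ⟨l, hl, hsl⟩ := hnd.subperm hsub
  calc wlen wt p = (l.map wt).sum := by rw [wlen, (hl.map wt).sum_eq]
    _ ≤ (q.edges.map wt).sum := (hsl.map wt).sum_le_sum (by simp)
    _ = wlen wt q := rfl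

lemma wlen_bypass_le (wt : Sym2 V → ℕ) {u v : V} (p : G.Walk u v) :
    wlen wt p.bypass ≤ wlen wt p :=
  wlen_le_of_nodup_subset wt p.bypass_isPath.isTrail.edges_nodup p.edges_bypass_subset

lemma wlen_perm {u v a b : V} {p : G.Walk u v} {q : G.Walk a b} (wt : Sym2 V → ℕ)
    (h : p.edges.Perm q.edges) : wlen wt p = wlen wt q :=
  (h.map wt).sum_eq

/-- Half path lemma: between any two vertices on a cycle there is a way around of at
most half the total weight. -/
lemma exists_half_path (wt : Sym2 V → ℕ) {v x z : V} {c : G.Walk v v} (hc : c.IsCycle)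
    (hx : x ∈ c.support) (hz : z ∈ c.support) :
    ∃ p : G.Walk x z, (∀ e ∈ p.edges, e ∈ c.edges) ∧ 2 * wlen wt p ≤ wlen wt c := by
  have hlen : 0 < c.length := by have := hc.three_le_length; omega
  set c' : G.Walk x x := c.rotate x hx with hc'def
  have hperm : c'.edges.Perm c.edges := (c.rotate_edges x hx).perm
  have hz' : z ∈ c'.support := by
    obtain ⟨e, he, hze⟩ := exists_edge_of_mem_support c hlen hz
    exact mem_support_of_mem_edges' (hperm.mem_iff.2 he) hze
  have hwc : wlen wt c' = wlen wt c := wlen_perm wt hperm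
  set t := c'.takeUntil z hz' with htdef
  set d := c'.dropUntil z hz' with hddef
  have hspec : t.append d = c' := c'.take_spec hz'
  have hsum : wlen wt t + wlen wt d = wlen wt c := by
    rw [← hwc, ← hspec, wlen_append]
  have htsub : ∀ e ∈ t.edges, e ∈ c.edges := fun e he =>
    hperm.mem_iff.1 (c'.edges_takeUntil_subset hz' he)
  have hdsub : ∀ e ∈ d.edges, e ∈ c.edges := fun e he =>
    hperm.mem_iff.1 (c'.edges_dropUntil_subset hz' he)
  by_cases hcase : 2 * wlen wt t ≤ wlen wt c
  · exact ⟨t, htsub, hcase⟩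
  · refine ⟨d.reverse, fun e he => hdsub e (by simpa [Walk.edges_reverse] using he), ?_⟩
    rw [wlen_reverse]
    omega

lemma mem_of_mem_foldr_symmDiff {l : List (Finset (Sym2 V))} {e : Sym2 V}
    (h : e ∈ l.foldr symmDiff ∅) : ∃ s ∈ l, e ∈ s := by
  induction l with
  | nil => simp at h
  | cons a l ih =>
    rw [List.foldr_cons] at h
    rcases Finset.mem_symmDiff.1 h with ⟨h1, -⟩ | ⟨h1, -⟩
    · exact ⟨a, by simp, h1⟩
    · obtain ⟨s, hs, hes⟩ := ih h1
      exact ⟨s, by simp [hs], hes⟩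


/-- At an internal vertex `w` of a path `cons h (cons h' B')` lying on the cycle `c`,
if every `c`-edge at an internal vertex is an edge of the path, then both path-edges at
`w` are edges of `c`. -/
lemma two_at_internal {v a w x b : V} {c : G.Walk v v} (hc : c.IsCycle)
    (h : G.Adj a w) (h' : G.Adj w x) (B' : G.Walk x b)
    (hA : (Walk.cons h (Walk.cons h' B')).IsPath)
    (hint : ∀ z ∈ (Walk.cons h (Walk.cons h' B')).support, z ≠ a → z ≠ b →
      ∀ f ∈ c.edges, z ∈ f → f ∈ (Walk.cons h (Walk.cons h' B')).edges)
    (hw : w ∈ c.support) :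
    s(a, w) ∈ c.edges ∧ s(w, x) ∈ c.edges := by
  have hA1 := (Walk.cons_isPath_iff _ _).1 hA
  have hB1 := (Walk.cons_isPath_iff _ _).1 hA1.1
  have hwa : w ≠ a := h.ne'
  have hwb : w ≠ b := by
    intro hwb
    exact hB1.2 (hwb ▸ B'.end_mem_support)
  have hwsup : w ∈ (Walk.cons h (Walk.cons h' B')).support := by
    simp [Walk.support_cons]
  obtain ⟨e1, e2, he1, he2, hne, hwe1, hwe2⟩ := cycle_two_edges hc hw
  have hclass : ∀ g ∈ c.edges, w ∈ g → g = s(a, w) ∨ g = s(w, x) := by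
    intro g hg hwg
    have hgA := hint w hwsup hwa hwb g hg hwg
    rw [Walk.edges_cons, Walk.edges_cons] at hgA
    rcases List.mem_cons.1 hgA with rfl | hgA'
    · exact Or.inl rfl
    rcases List.mem_cons.1 hgA' with rfl | hgB
    · exact Or.inr rfl
    · exact absurd (mem_support_of_mem_edges' hgB hwg) hB1.2
  rcases hclass e1 he1 hwe1 with h1 | h1 <;> rcases hclass e2 he2 hwe2 with h2 | h2
  · exact absurd (h1.trans h2.symm) hne
  · exact ⟨h1 ▸ he1, h2 ▸ he2⟩
  · exact ⟨h2 ▸ he2, h1 ▸ he1⟩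
  · exact absurd (h1.trans h2.symm) hne

/-- Forward propagation along a path inside a cycle. -/
lemma prop_fwd {v : V} {c : G.Walk v v} (hc : c.IsCycle) :
    ∀ {a b : V} (A : G.Walk a b), A.IsPath →
      (∀ z ∈ A.support, z ≠ a → z ≠ b → ∀ f ∈ c.edges, z ∈ f → f ∈ A.edges) →
      s(a, A.getVert 1) ∈ c.edges → ∀ e ∈ A.edges, e ∈ c.edges := by
  intro a b A
  induction A with
  | nil => intro _ _ _ e he; simp at he
  | @cons a w b h B ih =>
    intro hA hint hfirst
    have hfirst' : s(a, w) ∈ c.edges := by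
      simpa using hfirst
    cases B with
    | nil =>
      intro e he
      rw [Walk.edges_cons] at he
      rcases List.mem_cons.1 he with rfl | he'
      · exact hfirst'
      · simp at he'
    | @cons w x b h' B' =>
      have hboth := two_at_internal hc h h' B' hA hint
        (mem_support_of_mem_edges' hfirst' (by simp))
      have hintB : ∀ z ∈ (Walk.cons h' B').support, z ≠ w → z ≠ b →
          ∀ f ∈ c.edges, z ∈ f → f ∈ (Walk.cons h' B').edges := by
        intro z hz hzw hzb f hf hzf
        have hza : z ≠ a := by
          intro hza
          exact ((Walk.cons_isPath_iff _ _).1 hA).2 (hza ▸ hz)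
        have hfA := hint z (by rw [Walk.support_cons]; exact List.mem_cons_of_mem _ hz)
          hza hzb f hf hzf
        rw [Walk.edges_cons] at hfA
        rcases List.mem_cons.1 hfA with rfl | hfB
        · rcases Sym2.mem_iff.1 hzf with rfl | rfl
          · exact absurd rfl hza
          · exact absurd rfl hzw
        · exact hfB
      have hallB := ih ((Walk.cons_isPath_iff _ _).1 hA).1 hintB
        (by simpa using hboth.2)
      intro e he
      rw [Walk.edges_cons] at he
      rcases List.mem_cons.1 he with rfl | he'
      · exact hfirst'
      · exact hallB e he'

/-- Propagation from any edge: if a cycle shares one edge with such a path it contains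
the whole path. -/
lemma prop_any {v : V} {c : G.Walk v v} (hc : c.IsCycle) :
    ∀ {a b : V} (A : G.Walk a b), A.IsPath →
      (∀ z ∈ A.support, z ≠ a → z ≠ b → ∀ f ∈ c.edges, z ∈ f → f ∈ A.edges) →
      (∃ e₀ ∈ A.edges, e₀ ∈ c.edges) → ∀ e ∈ A.edges, e ∈ c.edges := by
  intro a b A
  induction A with
  | nil => rintro _ _ ⟨e₀, he₀, -⟩; simp at he₀
  | @cons a w b h B ih =>
    rintro hA hint ⟨e₀, he₀, he₀c⟩
    rw [Walk.edges_cons] at he₀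
    rcases List.mem_cons.1 he₀ with rfl | he₀B
    · exact prop_fwd hc (Walk.cons h B) hA hint (by simpa using he₀c)
    · cases B with
      | nil => simp at he₀B
      | @cons w x b h' B' =>
        have hintB : ∀ z ∈ (Walk.cons h' B').support, z ≠ w → z ≠ b →
            ∀ f ∈ c.edges, z ∈ f → f ∈ (Walk.cons h' B').edges := by
          intro z hz hzw hzb f hf hzf
          have hza : z ≠ a := by
            intro hza
            exact ((Walk.cons_isPath_iff _ _).1 hA).2 (hza ▸ hz)
          have hfA := hint z (by rw [Walk.support_cons]; exact List.mem_cons_of_mem _ hz)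
            hza hzb f hf hzf
          rw [Walk.edges_cons] at hfA
          rcases List.mem_cons.1 hfA with rfl | hfB
          · rcases Sym2.mem_iff.1 hzf with rfl | rfl
            · exact absurd rfl hza
            · exact absurd rfl hzw
          · exact hfB
        have hallB := ih ((Walk.cons_isPath_iff _ _).1 hA).1 hintB ⟨e₀, he₀B, he₀c⟩
        have hw : w ∈ c.support :=
          mem_support_of_mem_edges'
            (hallB _ (by rw [Walk.edges_cons]; exact List.mem_cons_self)) (by simp)
        have hboth := two_at_internal hc h h' B' hA hint hw
        intro e he
        rw [Walk.edges_cons] at he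
        rcases List.mem_cons.1 he with rfl | he'
        · exact hboth.1
        · exact hallB e he'

lemma edges_disjoint_of_inter_subsingleton {u v a b : V} {p : G.Walk u v} {q : G.Walk a b}
    {z₀ : V} (h : ∀ z, z ∈ p.support → z ∈ q.support → z = z₀) :
    ∀ e ∈ p.edges, e ∉ q.edges := by
  intro e hep heq
  induction e with
  | _ x y =>
    have hadj : G.Adj x y := G.mem_edgeSet.1 (p.edges_subset_edgeSet hep)
    have hx := h x (mem_support_of_mem_edges' hep (by simp))
      (mem_support_of_mem_edges' heq (by simp))
    have hy := h y (mem_support_of_mem_edges' hep (by simp))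
      (mem_support_of_mem_edges' heq (by simp))
    exact hadj.ne (by rw [hx, hy])

lemma tail_nodup_of_isPath {u v : V} {p : G.Walk u v} (hp : p.IsPath) :
    p.support.tail.Nodup := by
  have h := hp.support_nodup
  rw [Walk.support_eq_cons p] at h
  exact (List.nodup_cons.1 h).2

lemma start_not_mem_tail {u v : V} {p : G.Walk u v} (hp : p.IsPath) :
    u ∉ p.support.tail := by
  have h := hp.support_nodup
  rw [Walk.support_eq_cons p] at h
  exact (List.nodup_cons.1 h).1

lemma finRotate_ne_self {n : ℕ} (hn : 2 ≤ n) (i : Fin n) : finRotate n i ≠ i := by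
  match n, hn, i with
  | (m + 1), hn, i =>
    rw [finRotate_succ_apply]
    intro hcontra
    have h1 : (1 : Fin (m + 1)) = 0 := by
      have := hcontra
      nth_rewrite 2 [show i = i + 0 by rw [add_zero]] at this
      exact add_left_cancel this
    have := Fin.one_eq_zero_iff.1 h1
    omega

open Fin.NatCast in
lemma finRotate_iterate {m : ℕ} (i : Fin (m + 1)) (k : ℕ) :
    (finRotate (m + 1))^[k] i = i + k := by
  induction k with
  | zero => simp
  | succ k ih =>
    rw [Function.iterate_succ_apply', ih, finRotate_succ_apply]
    push_cast
    rw [add_assoc]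

open Fin.NatCast in
lemma finRotate_orbit {n : ℕ} (hn : 2 ≤ n) (i j : Fin n) :
    ∃ k : ℕ, (finRotate n)^[k] i = j := by
  match n, hn, i, j with
  | (m + 1), _, i, j =>
    refine ⟨(j - i).val, ?_⟩
    rw [finRotate_iterate, Fin.cast_val_eq_self]
    abel

namespace WheelSubdiv
variable {W : WheelSubdiv G}

lemma two_le_n : 2 ≤ W.n := by have := W.hn; omega

lemma rot_ne (i : Fin W.n) : finRotate W.n i ≠ i := finRotate_ne_self two_le_n i

lemma branch_rot_ne (i : Fin W.n) : W.branch i ≠ W.branch (finRotate W.n i) :=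
  fun h => (rot_ne i) (W.branch_inj h.symm)

lemma spoke_length_pos (i : Fin W.n) : 0 < (W.spoke i).length :=
  length_pos_of_ne _ (W.center_ne i)

lemma arc_length_pos (i : Fin W.n) : 0 < (W.arc i).length :=
  length_pos_of_ne _ (branch_rot_ne i)

lemma eq_center_of_mem_spokes {i j : Fin W.n} (hij : i ≠ j) {z : V}
    (h1 : z ∈ (W.spoke i).support) (h2 : z ∈ (W.spoke j).support) : z = W.center := by
  have hz : z ∈ {x | x ∈ (W.spoke i).support} ∩ {x | x ∈ (W.spoke j).support} := ⟨h1, h2⟩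
  rw [W.spoke_spoke i j hij] at hz
  exact hz

lemma mem_spoke_arc {i j : Fin W.n} {z : V} (h1 : z ∈ (W.spoke i).support)
    (h2 : z ∈ (W.arc j).support) :
    (z = W.center ∨ z = W.branch i) ∧
      (z = W.branch j ∨ z = W.branch (finRotate W.n j)) := by
  have hz : z ∈ {x | x ∈ (W.spoke i).support} ∩ {x | x ∈ (W.arc j).support} := ⟨h1, h2⟩
  rw [W.spoke_arc i j] at hz
  simpa using hz

lemma mem_arcs {i j : Fin W.n} (hij : i ≠ j) {z : V} (h1 : z ∈ (W.arc i).support)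
    (h2 : z ∈ (W.arc j).support) :
    (z = W.branch i ∨ z = W.branch (finRotate W.n i)) ∧
      (z = W.branch j ∨ z = W.branch (finRotate W.n j)) := by
  have hz : z ∈ {x | x ∈ (W.arc i).support} ∩ {x | x ∈ (W.arc j).support} := ⟨h1, h2⟩
  rw [W.arc_arc i j hij] at hz
  simpa using hz

lemma center_not_mem_arc (j : Fin W.n) : W.center ∉ (W.arc j).support := by
  intro h
  rcases (mem_spoke_arc ((W.spoke j).start_mem_support) h).2 with h1 | h1
  · exact W.center_ne j h1
  · exact W.center_ne _ h1

lemma edge_spoke_interior {i : Fin W.n} {z : V} (hz : z ∈ (W.spoke i).support)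
    (hzc : z ≠ W.center) (hzb : z ≠ W.branch i) {f : Sym2 V} (hf : f ∈ W.edges)
    (hzf : z ∈ f) : f ∈ (W.spoke i).edges := by
  obtain ⟨j, hj | hj⟩ := hf
  · by_cases hij : i = j
    · exact hij ▸ hj
    · exact absurd (eq_center_of_mem_spokes hij hz (mem_support_of_mem_edges' hj hzf)) hzc
  · rcases (mem_spoke_arc hz (mem_support_of_mem_edges' hj hzf)).1 with h1 | h1
    · exact absurd h1 hzc
    · exact absurd h1 hzb

lemma edge_arc_interior {i : Fin W.n} {z : V} (hz : z ∈ (W.arc i).support)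
    (hz1 : z ≠ W.branch i) (hz2 : z ≠ W.branch (finRotate W.n i)) {f : Sym2 V}
    (hf : f ∈ W.edges) (hzf : z ∈ f) : f ∈ (W.arc i).edges := by
  obtain ⟨j, hj | hj⟩ := hf
  · rcases (mem_spoke_arc (mem_support_of_mem_edges' hj hzf) hz).2 with h1 | h1
    · exact absurd h1 hz1
    · exact absurd h1 hz2
  · by_cases hij : i = j
    · exact hij ▸ hj
    · rcases (mem_arcs hij hz (mem_support_of_mem_edges' hj hzf)).1 with h1 | h1
      · exact absurd h1 hz1
      · exact absurd h1 hz2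

lemma edge_at_center {f : Sym2 V} (hf : f ∈ W.edges) (hcf : W.center ∈ f) :
    ∃ j, f ∈ (W.spoke j).edges := by
  obtain ⟨j, hj | hj⟩ := hf
  · exact ⟨j, hj⟩
  · exact absurd (mem_support_of_mem_edges' hj hcf) (center_not_mem_arc j)

lemma edge_at_branch {m : Fin W.n} {f : Sym2 V} (hf : f ∈ W.edges)
    (hbf : W.branch m ∈ f) :
    f ∈ (W.spoke m).edges ∨ f ∈ (W.arc m).edges ∨
      ∃ j, finRotate W.n j = m ∧ f ∈ (W.arc j).edges := by
  obtain ⟨j, hj | hj⟩ := hf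
  · by_cases hjm : m = j
    · exact Or.inl (hjm ▸ hj)
    · have := eq_center_of_mem_spokes hjm ((W.spoke m).end_mem_support)
        (mem_support_of_mem_edges' hj hbf)
      exact absurd this.symm (W.center_ne m)
  · by_cases hjm : m = j
    · exact Or.inr (Or.inl (hjm ▸ hj))
    · rcases (mem_arcs hjm ((W.arc m).start_mem_support)
        (mem_support_of_mem_edges' hj hbf)).2 with h1 | h1
      · exact absurd (W.branch_inj h1) hjm
      · exact Or.inr (Or.inr ⟨j, (W.branch_inj h1).symm ▸ rfl, hj⟩)

section CycleInWheel

variable {v : V} {c : G.Walk v v}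

lemma spoke_sub (hc : c.IsCycle) (hcE : ∀ e ∈ c.edges, e ∈ W.edges) {t : Fin W.n}
    (h : ∃ e ∈ (W.spoke t).edges, e ∈ c.edges) : ∀ e ∈ (W.spoke t).edges, e ∈ c.edges :=
  prop_any hc (W.spoke t) (W.spoke_path t)
    (fun z hz hz1 hz2 f hf hzf => edge_spoke_interior hz hz1 hz2 (hcE f hf) hzf) h

lemma arc_sub (hc : c.IsCycle) (hcE : ∀ e ∈ c.edges, e ∈ W.edges) {t : Fin W.n}
    (h : ∃ e ∈ (W.arc t).edges, e ∈ c.edges) : ∀ e ∈ (W.arc t).edges, e ∈ c.edges :=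
  prop_any hc (W.arc t) (W.arc_path t)
    (fun z hz hz1 hz2 f hf hzf => edge_arc_interior hz hz1 hz2 (hcE f hf) hzf) h

lemma center_case (hc : c.IsCycle) (hcE : ∀ e ∈ c.edges, e ∈ W.edges)
    (hcen : W.center ∈ c.support) : ∃ t, W.branch t ∈ c.support := by
  obtain ⟨e1, e2, he1, he2, hne, hce1, hce2⟩ := cycle_two_edges hc hcen
  obtain ⟨t, ht⟩ := edge_at_center (hcE e1 he1) hce1
  have hall := spoke_sub hc hcE ⟨e1, ht, he1⟩
  exact ⟨t, support_subset_of_edges_subset (spoke_length_pos t) hall _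
    (W.spoke t).end_mem_support⟩

lemma no_spoke_case (hc : c.IsCycle) (hcE : ∀ e ∈ c.edges, e ∈ W.edges)
    (hnc : W.center ∉ c.support) {t : Fin W.n} {e : Sym2 V}
    (he : e ∈ (W.spoke t).edges) (hec : e ∈ c.edges) : False := by
  have hall := spoke_sub hc hcE ⟨e, he, hec⟩
  exact hnc (support_subset_of_edges_subset (spoke_length_pos t) hall _
    (W.spoke t).start_mem_support)

lemma rim_case (hc : c.IsCycle) (hcE : ∀ e ∈ c.edges, e ∈ W.edges)
    (hnc : W.center ∉ c.support) : ∀ j, ∀ e ∈ (W.arc j).edges, e ∈ c.edges := by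
  have hne : c.edges ≠ [] := by
    have h3 := hc.three_le_length
    intro h
    rw [← Walk.length_edges, h] at h3
    simp at h3
  obtain ⟨e₀, he₀⟩ := List.exists_mem_of_ne_nil _ hne
  obtain ⟨m₀, hm₀ | hm₀⟩ := hcE e₀ he₀
  · exact absurd he₀ (fun h => no_spoke_case hc hcE hnc hm₀ h)
  have hstep : ∀ m : Fin W.n, (∀ e ∈ (W.arc m).edges, e ∈ c.edges) →
      ∀ e ∈ (W.arc (finRotate W.n m)).edges, e ∈ c.edges := by
    intro m hm
    have hb' : W.branch (finRotate W.n m) ∈ c.support :=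
      support_subset_of_edges_subset (arc_length_pos m) hm _ (W.arc m).end_mem_support
    obtain ⟨e1, e2, he1, he2, hne12, hb1, hb2⟩ := cycle_two_edges hc hb'
    have hcases : ∀ f ∈ c.edges, W.branch (finRotate W.n m) ∈ f →
        f ∈ (W.arc (finRotate W.n m)).edges ∨ f ∈ (W.arc m).edges := by
      intro f hf hbf
      rcases edge_at_branch (hcE f hf) hbf with h | h | ⟨j, hj, hjf⟩
      · exact absurd hf (fun hx => no_spoke_case hc hcE hnc h hx)
      · exact Or.inl h
      · have hjm : j = m := (finRotate W.n).injective hj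
        exact Or.inr (hjm ▸ hjf)
    rcases hcases e1 he1 hb1 with h1 | h1
    · exact arc_sub hc hcE ⟨e1, h1, he1⟩
    rcases hcases e2 he2 hb2 with h2 | h2
    · exact arc_sub hc hcE ⟨e2, h2, he2⟩
    · exact absurd (edge_at_end_unique (W.arc_path m) h1 h2 hb1 hb2) hne12
  have hiter : ∀ k, ∀ e ∈ (W.arc ((finRotate W.n)^[k] m₀)).edges, e ∈ c.edges := by
    intro k
    induction k with
    | zero => simpa using (arc_sub hc hcE ⟨e₀, hm₀, he₀⟩)
    | succ k ih =>
      rw [Function.iterate_succ_apply']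
      exact hstep _ ih
  intro j
  obtain ⟨k, hk⟩ := finRotate_orbit two_le_n m₀ j
  exact hk ▸ hiter k

lemma common_branch (hc : c.IsCycle) (hcE : ∀ e ∈ c.edges, e ∈ W.edges) :
    (W.center ∈ c.support ∧ ∃ t, W.branch t ∈ c.support) ∨
      (∀ j, W.branch j ∈ c.support) := by
  by_cases hcen : W.center ∈ c.support
  · exact Or.inl ⟨hcen, center_case hc hcE hcen⟩
  · exact Or.inr fun j => support_subset_of_edges_subset (arc_length_pos j)
      (rim_case hc hcE hcen j) _ (W.arc j).start_mem_support

end CycleInWheel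

end WheelSubdiv

namespace WheelSubdiv
variable {W : WheelSubdiv G}

lemma mem_spoke_arc_self {i : Fin W.n} {z : V} (h1 : z ∈ (W.spoke i).support)
    (h2 : z ∈ (W.arc i).support) : z = W.branch i := by
  rcases (mem_spoke_arc h1 h2).1 with h | h
  · exact absurd (h ▸ h2) (center_not_mem_arc i)
  · exact h

lemma mem_arc_spoke_rot {i : Fin W.n} {z : V} (h1 : z ∈ (W.arc i).support)
    (h2 : z ∈ (W.spoke (finRotate W.n i)).support) :
    z = W.branch (finRotate W.n i) := by
  rcases (mem_spoke_arc h2 h1).1 with h | h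
  · exact absurd (h ▸ h1) (center_not_mem_arc i)
  · exact h

lemma piece_eq (i : Fin W.n) : W.piece i
    = (W.spoke i).append ((W.arc i).append (W.spoke (finRotate W.n i)).reverse) := rfl

lemma piece_isCycle (i : Fin W.n) : (W.piece i).IsCycle := by
  have hAB := fun z (h1 : z ∈ (W.spoke i).support) (h2 : z ∈ (W.arc i).support) =>
    mem_spoke_arc_self h1 h2
  have hAC := fun z (h1 : z ∈ (W.spoke i).support)
      (h2 : z ∈ (W.spoke (finRotate W.n i)).support) =>
    eq_center_of_mem_spokes (Ne.symm (rot_ne i)) h1 h2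
  have hBC := fun z (h1 : z ∈ (W.arc i).support)
      (h2 : z ∈ (W.spoke (finRotate W.n i)).support) => mem_arc_spoke_rot h1 h2
  have hApath := W.spoke_path i
  have hBpath := W.arc_path i
  have hCpath := W.spoke_path (finRotate W.n i)
  refine ⟨⟨⟨?_⟩, ?_⟩, ?_⟩
  · -- edges nodup
    rw [piece_eq, Walk.edges_append, Walk.edges_append]
    rw [List.nodup_append, List.nodup_append]
    refine ⟨hApath.isTrail.edges_nodup,
      ⟨hBpath.isTrail.edges_nodup, ?_, ?_⟩, ?_⟩
    · rw [Walk.edges_reverse]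
      exact List.nodup_reverse.2 hCpath.isTrail.edges_nodup
    · -- Disjoint B-edges C.reverse-edges
      intro e heB f heC hef; subst hef
      rw [Walk.edges_reverse, List.mem_reverse] at heC
      exact edges_disjoint_of_inter_subsingleton hBC e heB heC
    · -- Disjoint A-edges (B ++ C.reverse)-edges
      intro e heA f he2 hef; subst hef
      rcases List.mem_append.1 he2 with heB | heC
      · exact edges_disjoint_of_inter_subsingleton hAB e heA heB
      · rw [Walk.edges_reverse, List.mem_reverse] at heC
        exact edges_disjoint_of_inter_subsingleton hAC e heA heC
  · -- ne nil
    intro hnil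
    have hlen : (W.piece i).length = 0 := by rw [hnil]; rfl
    rw [piece_eq, Walk.length_append, Walk.length_append] at hlen
    have := spoke_length_pos (W := W) i
    omega
  · -- support tail nodup
    have hsupp : (W.piece i).support.tail
        = (W.spoke i).support.tail ++ ((W.arc i).support.tail
            ++ (W.spoke (finRotate W.n i)).reverse.support.tail) := by
      rw [piece_eq, Walk.support_append, Walk.support_append]
      rw [Walk.support_eq_cons (W.spoke i), Walk.support_eq_cons (W.arc i)]
      simp
    rw [hsupp, List.nodup_append, List.nodup_append]
    refine ⟨tail_nodup_of_isPath hApath,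
      ⟨tail_nodup_of_isPath hBpath, tail_nodup_of_isPath hCpath.reverse, ?_⟩, ?_⟩
    · -- B.tail vs C.rev.tail
      intro z hzB z' hzC hzz; subst hzz
      have h1 : z ∈ (W.arc i).support := mem_tail hzB
      have h2 : z ∈ (W.spoke (finRotate W.n i)).support := by
        have := mem_tail hzC
        rwa [Walk.support_reverse, List.mem_reverse] at this
      have hz := hBC z h1 h2
      exact start_not_mem_tail hCpath.reverse (hz ▸ hzC)
    · -- A.tail vs rest
      intro z hzA z' hz2 hzz; subst hzz
      have h1 : z ∈ (W.spoke i).support := mem_tail hzA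
      rcases List.mem_append.1 hz2 with hzB | hzC
      · have hz := hAB z h1 (mem_tail hzB)
        exact start_not_mem_tail hBpath (hz ▸ hzB)
      · have h2 : z ∈ (W.spoke (finRotate W.n i)).support := by
          have := mem_tail hzC
          rwa [Walk.support_reverse, List.mem_reverse] at this
        have hz := hAC z h1 h2
        exact start_not_mem_tail hApath (hz ▸ hzA)

lemma piece_edges_subset (i : Fin W.n) : ∀ e ∈ (W.piece i).edges, e ∈ W.edges := by
  intro e he
  rw [piece_eq, Walk.edges_append, Walk.edges_append] at he
  rcases List.mem_append.1 he with h | h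
  · exact ⟨i, Or.inl h⟩
  rcases List.mem_append.1 h with h | h
  · exact ⟨i, Or.inr h⟩
  · exact ⟨finRotate W.n i, Or.inl (by rwa [Walk.edges_reverse, List.mem_reverse] at h)⟩

lemma edge_mem_piece {e : Sym2 V} (he : e ∈ W.edges) : ∃ i, e ∈ (W.piece i).edges := by
  obtain ⟨i, h | h⟩ := he
  · exact ⟨i, by rw [piece_eq, Walk.edges_append]; exact List.mem_append_left _ h⟩
  · exact ⟨i, by
      rw [piece_eq, Walk.edges_append, Walk.edges_append]
      exact List.mem_append_right _ (List.mem_append_left _ h)⟩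

lemma exists_short_cycle_through {wt : Sym2 V → ℕ} {r : ℕ∞} (hloc : W.RLocal wt r)
    {x : V} (hx : x ∈ W.support) :
    ∃ (u : V) (c : G.Walk u u), c.IsCycle ∧ (∀ e ∈ c.edges, e ∈ W.edges) ∧
      (wlen wt c : ℕ∞) ≤ r ∧ x ∈ c.support := by
  have key : ∀ e ∈ W.edges, x ∈ e →
      ∃ (u : V) (c : G.Walk u u), c.IsCycle ∧ (∀ e' ∈ c.edges, e' ∈ W.edges) ∧
        (wlen wt c : ℕ∞) ≤ r ∧ x ∈ c.support := by
    intro e he hxe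
    obtain ⟨i, hpi⟩ := edge_mem_piece he
    obtain ⟨l, hl, hfold⟩ := hloc W.center (W.piece i) (piece_isCycle i)
      (piece_edges_subset i)
    have he' : e ∈ (W.piece i).edges.toFinset := List.mem_toFinset.2 hpi
    rw [← hfold] at he'
    obtain ⟨s, hs, hes⟩ := mem_of_mem_foldr_symmDiff he'
    obtain ⟨u, c, hcyc, hE, hwl, hts⟩ := hl s hs
    refine ⟨u, c, hcyc, hE, hwl, mem_support_of_mem_edges' ?_ hxe⟩
    exact List.mem_toFinset.1 (hts ▸ hes)
  obtain ⟨i, hi | hi⟩ := hx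
  · obtain ⟨e, he, hxe⟩ := exists_edge_of_mem_support _ (spoke_length_pos i) hi
    exact key e ⟨i, Or.inl he⟩ hxe
  · obtain ⟨e, he, hxe⟩ := exists_edge_of_mem_support _ (arc_length_pos i) hi
    exact key e ⟨i, Or.inr he⟩ hxe

end WheelSubdiv

end Helpers

end LocalWheels


/-- Every `r`-local subdivision of a wheel has (weighted) diameter at
most `r`: any two of its vertices are joined by a path within the subdivision of
weighted length at most `r`. -/
theorem LocalWheels.stmt0 {V : Type*} [Fintype V] [DecidableEq V]
    (G : SimpleGraph V) (wt : Sym2 V → ℕ) (hw : LocalWheels.WeightPos G wt) (r : ℕ∞)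
    (W : LocalWheels.WheelSubdiv G) (hloc : W.RLocal wt r) :
    ∀ x ∈ W.support, ∀ y ∈ W.support,
      ∃ p : G.Walk x y, p.IsPath ∧ (∀ e ∈ p.edges, e ∈ W.edges) ∧
        (LocalWheels.wlen wt p : ℕ∞) ≤ r := by
  intro x hx y hy
  obtain ⟨u₁, c₁, hc₁, hE₁, hw₁, hx₁⟩ := WheelSubdiv.exists_short_cycle_through hloc hx
  obtain ⟨u₂, c₂, hc₂, hE₂, hw₂, hy₂⟩ := WheelSubdiv.exists_short_cycle_through hloc hy
  have hcommon : ∃ z, z ∈ c₁.support ∧ z ∈ c₂.support := by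
    rcases WheelSubdiv.common_branch hc₁ hE₁ with ⟨hcen₁, t, hbt⟩ | hall₁ <;>
      rcases WheelSubdiv.common_branch hc₂ hE₂ with ⟨hcen₂, t₂, hbt₂⟩ | hall₂
    · exact ⟨W.center, hcen₁, hcen₂⟩
    · exact ⟨W.branch t, hbt, hall₂ t⟩
    · exact ⟨W.branch t₂, hall₁ t₂, hbt₂⟩
    · exact ⟨W.branch ⟨0, by have := W.hn; omega⟩, hall₁ _, hall₂ _⟩
  obtain ⟨z, hz₁, hz₂⟩ := hcommon
  obtain ⟨p₁, hp₁sub, hp₁len⟩ := exists_half_path wt hc₁ hx₁ hz₁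
  obtain ⟨p₂, hp₂sub, hp₂len⟩ := exists_half_path wt hc₂ hz₂ hy₂
  refine ⟨(p₁.append p₂).bypass, Walk.bypass_isPath _, ?_, ?_⟩
  · intro e he
    have hmem := (p₁.append p₂).edges_bypass_subset he
    rw [Walk.edges_append] at hmem
    rcases List.mem_append.1 hmem with h | h
    · exact hE₁ e (hp₁sub e h)
    · exact hE₂ e (hp₂sub e h)
  · have hb := wlen_bypass_le wt (p₁.append p₂)
    rw [wlen_append] at hb
    induction r using ENat.recTopCoe with
    | top => exact le_top
    | coe R =>
      have h1 : wlen wt c₁ ≤ R := by exact_mod_cast hw₁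
      have h2 : wlen wt c₂ ≤ R := by exact_mod_cast hw₂
      have hfin : wlen wt ((p₁.append p₂).bypass) ≤ R := by omega
      exact_mod_cast hfin
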